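/- Let n ≥ 1. The constant 2 in the inequality 2·s_{Bⁿ} ≤ c_{Bⁿ} is best possible: for every ε > 0 there exists x ∈ Bⁿ with x ≠ 0 such that c_{Bⁿ}(x,−x) < (2+ε)·s_{Bⁿ}(x,−x). -/

import Mathlib

open Metric Set Real

/-- The triangular ratio metric of `G`. -/
noncomputable def sMet {E : Type*} [MetricSpace E] (G : Set E) (x y : E) : ℝ :=
  sSup ((fun z => dist x y / (dist x z + dist z y)) '' frontier G)

/-- The Cassinian metric of `G`. -/
noncomputable def cMet {E : Type*} [MetricSpace E] (G : Set E) (x y : E) : ℝ :=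
  sSup ((fun z => dist x y / (dist x z * dist z y)) '' frontier G)

/-- The distance ratio metric of `G`. -/
noncomputable def jMet {E : Type*} [MetricSpace E] (G : Set E) (x y : E) : ℝ :=
  Real.log (1 + dist x y / min (infDist x (frontier G)) (infDist y (frontier G)))

section aux

variable {n : ℕ}

lemma aux_sphere_bounds (t : ℝ) (ht0 : 0 ≤ t) (ht1 : t < 1) (e z : EuclideanSpace ℝ (Fin n))
    (he : ‖e‖ = 1) (hz : ‖z‖ = 1) :
    2 ≤ dist (t • e) z + dist z (-(t • e)) ∧
      1 - t ^ 2 ≤ dist (t • e) z * dist z (-(t • e)) := by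
  set x : EuclideanSpace ℝ (Fin n) := t • e with hx
  have hd1 : dist x z = ‖x - z‖ := dist_eq_norm _ _
  have hd2 : dist z (-x) = ‖z + x‖ := by rw [dist_eq_norm, sub_neg_eq_add]
  have hnx : ‖x‖ = t := by rw [hx, norm_smul, Real.norm_eq_abs, abs_of_nonneg ht0, he, mul_one]
  constructor
  · have : ‖(x - z) + (z + x)‖ ≤ ‖x - z‖ + ‖z + x‖ := norm_add_le _ _
    have h2 : (x - z) + (z + x) = (2 : ℝ) • x := by module
    rw [h2, norm_smul] at this
    rw [hd1, hd2]
    -- ‖2•x‖ = 2t, but we need ≥ 2? No! min is 2‖z‖ not 2‖x‖.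
    -- use instead: ‖(z - x) + (z + x)‖ = ‖2 • z‖ = 2
    have h3 : ‖(z - x) + (z + x)‖ ≤ ‖z - x‖ + ‖z + x‖ := norm_add_le _ _
    have h4 : (z - x) + (z + x) = (2 : ℝ) • z := by module
    rw [h4, norm_smul, hz, Real.norm_ofNat, mul_one, norm_sub_rev] at h3
    linarith [h3]
  · have hsub : ‖x - z‖ ^ 2 = ‖x‖ ^ 2 - 2 * inner ℝ x z + ‖z‖ ^ 2 := norm_sub_sq_real x z
    have hadd : ‖z + x‖ ^ 2 = ‖z‖ ^ 2 + 2 * inner ℝ z x + ‖x‖ ^ 2 := norm_add_sq_real z x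
    have hsym : (inner ℝ z x : ℝ) = inner ℝ x z := real_inner_comm x z
    have hcs : |(inner ℝ x z : ℝ)| ≤ ‖x‖ * ‖z‖ := abs_real_inner_le_norm x z
    rw [hnx, hz, mul_one] at hcs
    have hcs2 : (inner ℝ x z : ℝ) ^ 2 ≤ t ^ 2 := by
      have := sq_abs (inner ℝ x z : ℝ)
      nlinarith [abs_nonneg (inner ℝ x z : ℝ)]
    rw [hd1, hd2]
    have ha : 0 ≤ ‖x - z‖ := norm_nonneg _
    have hb : 0 ≤ ‖z + x‖ := norm_nonneg _
    have hprod : (‖x - z‖ * ‖z + x‖) ^ 2 ≥ (1 - t ^ 2) ^ 2 := by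
      have : (‖x - z‖ * ‖z + x‖) ^ 2 = ‖x - z‖ ^ 2 * ‖z + x‖ ^ 2 := by ring
      rw [this, hsub, hadd, hsym, hnx, hz]
      nlinarith [hcs2]
    nlinarith [mul_nonneg ha hb, sq_nonneg (1 - t ^ 2), ht1]

lemma aux_vals (hn : 1 ≤ n) (t : ℝ) (ht0 : 0 < t) (ht1 : t < 1) :
    ∃ x ∈ Metric.ball (0 : EuclideanSpace ℝ (Fin n)) 1, x ≠ 0 ∧
      sMet (Metric.ball (0 : EuclideanSpace ℝ (Fin n)) 1) x (-x) = t ∧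
      cMet (Metric.ball (0 : EuclideanSpace ℝ (Fin n)) 1) x (-x) = 2 * t / (1 - t ^ 2) := by
  set e : EuclideanSpace ℝ (Fin n) := EuclideanSpace.single (⟨0, hn⟩ : Fin n) (1 : ℝ) with he
  have hne : ‖e‖ = 1 := by rw [he, EuclideanSpace.norm_single]; simp
  set x : EuclideanSpace ℝ (Fin n) := t • e with hx
  have hnx : ‖x‖ = t := by
    rw [hx, norm_smul, Real.norm_eq_abs, abs_of_nonneg ht0.le, hne, mul_one]
  have hfr : frontier (Metric.ball (0 : EuclideanSpace ℝ (Fin n)) 1) = sphere 0 1 :=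
    frontier_ball 0 one_ne_zero
  have hdxx : dist x (-x) = 2 * t := by
    rw [dist_eq_norm, sub_neg_eq_add]
    have : x + x = (2 : ℝ) • x := by module
    rw [this, norm_smul, hnx, Real.norm_ofNat]
  have hesp : e ∈ sphere (0 : EuclideanSpace ℝ (Fin n)) 1 := by
    simp [mem_sphere_iff_norm, hne]
  have hdxe : dist x e = 1 - t := by
    rw [dist_eq_norm]
    have : x - e = (t - 1) • e := by rw [hx]; module
    rw [this, norm_smul, hne, mul_one, Real.norm_eq_abs, abs_of_nonpos (by linarith)]
    ring
  have hdex : dist e (-x) = 1 + t := by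
    rw [dist_eq_norm, sub_neg_eq_add]
    have : e + x = (1 + t) • e := by rw [hx]; module
    rw [this, norm_smul, hne, mul_one, Real.norm_eq_abs, abs_of_nonneg (by linarith)]
  have ht2 : (0:ℝ) < 1 - t ^ 2 := by nlinarith
  refine ⟨x, ?_, ?_, ?_, ?_⟩
  · simpa [mem_ball, dist_eq_norm, hnx] using ht1
  · intro h
    rw [h] at hnx
    simp at hnx
    linarith
  · -- sMet
    unfold sMet
    rw [hfr]
    apply IsGreatest.csSup_eq
    constructor
    · exact ⟨e, hesp, by simp only [hdxx, hdxe, hdex]; field_simp; ring⟩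
    · rintro y ⟨z, hz, rfl⟩
      rw [mem_sphere_iff_norm, sub_zero] at hz
      obtain ⟨hsum, -⟩ := aux_sphere_bounds t ht0.le ht1 e z hne hz
      rw [hdxx, ← hx] at *
      calc 2 * t / (dist x z + dist z (-x)) ≤ 2 * t / 2 :=
            div_le_div_of_nonneg_left (by linarith) (by norm_num) hsum
        _ = t := by ring
  · -- cMet
    unfold cMet
    rw [hfr]
    apply IsGreatest.csSup_eq
    constructor
    · refine ⟨e, hesp, ?_⟩
      simp only [hdxx, hdxe, hdex]
      have : (1 - t) * (1 + t) = 1 - t ^ 2 := by ring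
      rw [this]
    · rintro y ⟨z, hz, rfl⟩
      rw [mem_sphere_iff_norm, sub_zero] at hz
      obtain ⟨-, hprod⟩ := aux_sphere_bounds t ht0.le ht1 e z hne hz
      rw [hdxx, ← hx] at *
      exact div_le_div_of_nonneg_left (by linarith) ht2 hprod

end aux

/-- The constant 2 in `2·s_{Bⁿ} ≤ c_{Bⁿ}` is best possible: for every `ε > 0`
there is `x ∈ Bⁿ`, `x ≠ 0`, with `c_{Bⁿ}(x,−x) < (2+ε)·s_{Bⁿ}(x,−x)`. -/
theorem two_sharp (n : ℕ) (hn : 1 ≤ n) (ε : ℝ) (hε : 0 < ε) :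
    ∃ x ∈ Metric.ball (0 : EuclideanSpace ℝ (Fin n)) 1, x ≠ 0 ∧
      cMet (Metric.ball (0 : EuclideanSpace ℝ (Fin n)) 1) x (-x) <
        (2 + ε) * sMet (Metric.ball (0 : EuclideanSpace ℝ (Fin n)) 1) x (-x) := by
  set t : ℝ := Real.sqrt (ε / (2 + ε)) / 2 with ht
  have hq : 0 < ε / (2 + ε) := div_pos hε (by linarith)
  have hq1 : ε / (2 + ε) < 1 := (div_lt_one (by linarith)).2 (by linarith)
  have hs0 : 0 < Real.sqrt (ε / (2 + ε)) := Real.sqrt_pos.2 hq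
  have hs1 : Real.sqrt (ε / (2 + ε)) < 1 := by
    rw [show (1:ℝ) = Real.sqrt 1 by simp]
    exact Real.sqrt_lt_sqrt hq.le hq1
  have ht0 : 0 < t := by positivity
  have ht1 : t < 1 := by rw [ht]; linarith
  have htsq : t ^ 2 < ε / (2 + ε) := by
    have : t ^ 2 = ε / (2 + ε) / 4 := by
      rw [ht, div_pow, Real.sq_sqrt hq.le]; norm_num
    rw [this]; linarith
  obtain ⟨x, hxb, hx0, hs, hc⟩ := aux_vals hn t ht0 ht1
  refine ⟨x, hxb, hx0, ?_⟩
  rw [hs, hc]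
  rw [div_lt_iff₀ (by nlinarith)]
  have h2 : 2 < (2 + ε) * (1 - t ^ 2) := by
    have : (2 + ε) * (ε / (2 + ε)) = ε := by field_simp
    nlinarith
  nlinarith
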